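/- For probability matrices P₁ (b₀×b₁) and P₂ (c₀×c₁) with positive entries and 0 ≤ μ ≤ 1, the bucketing information I(P, λ₀, λ₁, μ) = sup_Q [λ₀·K(Q_{·*}‖P_{·*}) + λ₁·K(Q_{*·}‖P_{*·}) − μ·K(Q‖P)] is additive under tensor products: I(P₁⊗P₂, λ₀, λ₁, μ) = I(P₁, λ₀, λ₁, μ) + I(P₂, λ₀, λ₁, μ), for any λ₀, λ₁ ≤ 1 ≤ λ₀+λ₁. -/

import Mathlib

open Finset

/-- The set of values `λ₀ K(Q_{·*}‖P_{·*}) + λ₁ K(Q_{*·}‖P_{*·}) − μ K(Q‖P)`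
as `Q` ranges over probability matrices; the bucketing information
`I(P, λ₀, λ₁, μ)` is its supremum. -/
def bucketInfoSet {α β : Type*} [Fintype α] [Fintype β]
    (P : α → β → ℝ) (lam0 lam1 mu : ℝ) : Set ℝ :=
  { x | ∃ Q : α → β → ℝ, (∀ j k, 0 ≤ Q j k) ∧ (∑ j, ∑ k, Q j k = 1) ∧
    x = lam0 * (∑ j, (∑ k, Q j k) * Real.log ((∑ k, Q j k) / (∑ k, P j k))) +
        lam1 * (∑ k, (∑ j, Q j k) * Real.log ((∑ j, Q j k) / (∑ j, P j k))) -
        mu * (∑ j, ∑ k, Q j k * Real.log (Q j k / P j k)) }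

noncomputable def klT (a b : ℝ) : ℝ := a * Real.log (a / b)

lemma klT_zero (b : ℝ) : klT 0 b = 0 := zero_mul _

section helpers

variable {α β γ δ : Type*} [Fintype α] [Fintype β] [Fintype γ] [Fintype δ]

/-- The objective functional of the bucketing-information problem. -/
noncomputable def Fb (P Q : α → β → ℝ) (l0 l1 m : ℝ) : ℝ :=
  l0 * (∑ j, klT (∑ k, Q j k) (∑ k, P j k)) +
    l1 * (∑ k, klT (∑ j, Q j k) (∑ j, P j k)) -
    m * (∑ j, ∑ k, klT (Q j k) (P j k))

lemma sum_tensor (f : α → β → ℝ) (g : γ → δ → ℝ) :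
    (∑ j : α × γ, ∑ k : β × δ, f j.1 k.1 * g j.2 k.2)
      = (∑ j, ∑ k, f j k) * (∑ j, ∑ k, g j k) := by
  simp only [Fintype.sum_prod_type, ← Finset.mul_sum, ← Finset.sum_mul]

/-- Marginal pair-sum splits as a product. -/
lemma sum_pair (u : β → ℝ) (v : δ → ℝ) :
    (∑ k : β × δ, u k.1 * v k.2) = (∑ k, u k) * (∑ k, v k) := by
  rw [Fintype.sum_prod_type]
  simp only [← Finset.mul_sum, ← Finset.sum_mul]

end helpers

section core
lemma klT_one : klT 1 1 = 0 := by simp [klT]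

lemma klT_sum_le {ι : Type*} (s : Finset ι) (a b : ι → ℝ)
    (ha : ∀ i ∈ s, 0 ≤ a i) (hb : ∀ i ∈ s, 0 ≤ b i)
    (hab : ∀ i ∈ s, b i = 0 → a i = 0) :
    klT (∑ i ∈ s, a i) (∑ i ∈ s, b i) ≤ ∑ i ∈ s, klT (a i) (b i) := by
  set t := ∑ i ∈ s, b i with ht
  rcases eq_or_lt_of_le (Finset.sum_nonneg hb) with h0 | hpos
  · -- all b zero, hence all a zero
    have hb0 : ∀ i ∈ s, b i = 0 := by
      intro i hi
      exact (Finset.sum_eq_zero_iff_of_nonneg hb).mp h0.symm i hi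
    have ha0 : ∀ i ∈ s, a i = 0 := fun i hi => hab i hi (hb0 i hi)
    rw [Finset.sum_eq_zero ha0, klT_zero]
    refine le_of_eq (Finset.sum_eq_zero fun i hi => ?_).symm
    rw [ha0 i hi, klT_zero]
  · -- Jensen with f x = x * log x, weights b i / t, points a i / b i
    have htne : t ≠ 0 := ne_of_gt hpos
    have key := Real.convexOn_mul_log.map_sum_le (t := s)
      (w := fun i => b i / t) (p := fun i => a i / b i)
      (fun i hi => div_nonneg (hb i hi) hpos.le)
      (by rw [← Finset.sum_div, ← ht, div_self htne])
      (fun i hi => Set.mem_Ici.mpr (div_nonneg (ha i hi) (hb i hi)))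
    have hsum : ∑ i ∈ s, (b i / t) • (a i / b i) = (∑ i ∈ s, a i) / t := by
      rw [Finset.sum_div]
      refine Finset.sum_congr rfl fun i hi => ?_
      rcases eq_or_lt_of_le (hb i hi) with hbi | hbi
      · rw [hab i hi hbi.symm, ← hbi]; simp
      · rw [smul_eq_mul]; field_simp
    rw [hsum] at key
    have := mul_le_mul_of_nonneg_left key hpos.le
    calc klT (∑ i ∈ s, a i) t = t * ((∑ i ∈ s, a i) / t * Real.log ((∑ i ∈ s, a i) / t)) := by
          rw [klT]; field_simp
      _ ≤ t * ∑ i ∈ s, (b i / t) • ((a i / b i) * Real.log (a i / b i)) := this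
      _ = ∑ i ∈ s, klT (a i) (b i) := by
          rw [Finset.mul_sum]
          refine Finset.sum_congr rfl fun i hi => ?_
          rcases eq_or_lt_of_le (hb i hi) with hbi | hbi
          · rw [hab i hi hbi.symm, klT_zero, ← hbi]; simp
          · rw [klT, smul_eq_mul]
            field_simp

/-- Tensor splitting of a single KL term. -/
lemma klT_mul {a b c d : ℝ} (ha : 0 ≤ a) (hc : 0 ≤ c) (hb : 0 < b) (hd : 0 < d) :
    klT (a * c) (b * d) = c * klT a b + a * klT c d := by
  rcases eq_or_lt_of_le ha with ha' | ha'
  · rw [← ha', zero_mul, klT_zero, klT_zero, mul_zero, zero_mul, add_zero]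
  rcases eq_or_lt_of_le hc with hc' | hc'
  · rw [← hc', mul_zero, klT_zero, klT_zero, zero_mul, mul_zero, add_zero]
  have h1 : a * c / (b * d) = (a / b) * (c / d) := (div_mul_div_comm a b c d).symm
  rw [klT, klT, klT, h1, Real.log_mul (by positivity) (by positivity)]
  ring

/-- Chain-rule splitting of the denominator. -/
lemma klT_split {R a p q : ℝ} (hR : 0 ≤ R) (h : R = 0 ∨ 0 < a) (hp : 0 < p) (hq : 0 < q) :
    klT R (p * q) = klT R (a * q) + R * Real.log (a / p) := by
  rcases h with h | h
  · rw [h, klT_zero, klT_zero, zero_mul, add_zero]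
  rcases eq_or_lt_of_le hR with hR' | hR'
  · rw [← hR', klT_zero, klT_zero, zero_mul, add_zero]
  have h1 : R / (p * q) = (R / (a * q)) * (a / p) := by rw [div_mul_div_comm]; rw [div_eq_div_iff (by positivity) (by positivity)]; ring
  rw [klT, klT, h1, Real.log_mul (by positivity) (by positivity)]
  ring

/-- Upper bound for a single KL term with `s ≤ 1`. -/
lemma klT_le {s t : ℝ} (hs0 : 0 ≤ s) (hs1 : s ≤ 1) (ht0 : 0 < t) (ht1 : t ≤ 1) :
    klT s t ≤ -Real.log t := by
  have hlt : 0 ≤ -Real.log t := by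
    simpa using Real.log_nonpos ht0.le ht1
  rcases eq_or_lt_of_le hs0 with hs | hs
  · rw [← hs, klT_zero]; exact hlt
  have : klT s t = s * Real.log s + s * (-Real.log t) := by
    rw [klT, Real.log_div (ne_of_gt hs) (ne_of_gt ht0)]; ring
  rw [this]
  have h1 : s * Real.log s ≤ 0 :=
    mul_nonpos_of_nonneg_of_nonpos hs0 (Real.log_nonpos hs0 hs1)
  nlinarith

lemma klT_mul_left {A x q : ℝ} (hA : 0 ≤ A) (hx : 0 ≤ x) (hq : 0 < q) :
    klT (A * x) (A * q) = A * klT x q := by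
  rcases eq_or_lt_of_le hA with hA' | hA'
  · rw [← hA', zero_mul, zero_mul, klT_zero, zero_mul]
  rw [klT_mul hA'.le hx hA' hq, klT, div_self (ne_of_gt hA'), Real.log_one, mul_zero, mul_zero,
    zero_add]

variable {α β γ δ : Type*} [Fintype α] [Fintype β] [Fintype γ] [Fintype δ]

/-- Chain rule inequality for the row-marginal KL term. -/
lemma row_le [Nonempty β] [Nonempty δ] (f : α → β → ℝ) (g : γ → δ → ℝ)
    (hf : ∀ j k, 0 < f j k) (hg : ∀ j k, 0 < g j k)
    (A : α → β → ℝ) (B : α → β → γ → δ → ℝ)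
    (hA0 : ∀ j k, 0 ≤ A j k) (hB0 : ∀ j k j' k', 0 ≤ B j k j' k')
    (hBsum : ∀ j k, ∑ j', ∑ k', B j k j' k' = 1) :
    ∑ j : α × γ, klT (∑ k : β × δ, A j.1 k.1 * B j.1 k.1 j.2 k.2)
        (∑ k : β × δ, f j.1 k.1 * g j.2 k.2)
      ≤ (∑ j₁, klT (∑ k₁, A j₁ k₁) (∑ k₁, f j₁ k₁))
        + ∑ j₁, ∑ k₁, A j₁ k₁ * ∑ j₂, klT (∑ k₂, B j₁ k₁ j₂ k₂) (∑ k₂, g j₂ k₂) := by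
  -- notation
  set p : α → ℝ := fun j₁ => ∑ k₁, f j₁ k₁ with hp
  set q : γ → ℝ := fun j₂ => ∑ k₂, g j₂ k₂ with hq
  set a : α → ℝ := fun j₁ => ∑ k₁, A j₁ k₁ with ha
  set Br : α → β → γ → ℝ := fun j₁ k₁ j₂ => ∑ k₂, B j₁ k₁ j₂ k₂ with hBr
  have hppos : ∀ j₁, 0 < p j₁ := fun j₁ => Finset.sum_pos (fun k _ => hf j₁ k) univ_nonempty
  have hqpos : ∀ j₂, 0 < q j₂ := fun j₂ => Finset.sum_pos (fun k _ => hg j₂ k) univ_nonempty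
  have ha0 : ∀ j₁, 0 ≤ a j₁ := fun j₁ => Finset.sum_nonneg fun k _ => hA0 j₁ k
  have hBr0 : ∀ j₁ k₁ j₂, 0 ≤ Br j₁ k₁ j₂ :=
    fun j₁ k₁ j₂ => Finset.sum_nonneg fun k _ => hB0 j₁ k₁ j₂ k
  have hBrsum : ∀ j₁ k₁, ∑ j₂, Br j₁ k₁ j₂ = 1 := fun j₁ k₁ => hBsum j₁ k₁
  -- rewrite sums over product types
  have hR : ∀ j₁ j₂, ∑ k : β × δ, A j₁ k.1 * B j₁ k.1 j₂ k.2
      = ∑ k₁, A j₁ k₁ * Br j₁ k₁ j₂ := by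
    intro j₁ j₂
    rw [Fintype.sum_prod_type]
    simp only [← Finset.mul_sum]
    rfl
  have hD : ∀ j₁ j₂, ∑ k : β × δ, f j₁ k.1 * g j₂ k.2 = p j₁ * q j₂ := by
    intro j₁ j₂
    rw [Fintype.sum_prod_type]
    simp only [← Finset.mul_sum, ← Finset.sum_mul]
    rfl
  have key : ∀ j₁, ∑ j₂, klT (∑ k₁, A j₁ k₁ * Br j₁ k₁ j₂) (p j₁ * q j₂)
      ≤ klT (a j₁) (p j₁) + ∑ k₁, A j₁ k₁ * ∑ j₂, klT (Br j₁ k₁ j₂) (q j₂) := by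
    intro j₁
    have hRa : ∀ j₂, (∑ k₁, A j₁ k₁ * Br j₁ k₁ j₂) = 0 ∨ 0 < a j₁ := by
      intro j₂
      rcases eq_or_lt_of_le (ha0 j₁) with h | h
      · left
        refine Finset.sum_eq_zero fun k₁ _ => ?_
        have hz := (Finset.sum_eq_zero_iff_of_nonneg (fun k _ => hA0 j₁ k)).mp h.symm k₁
          (mem_univ _)
        rw [hz, zero_mul]
      · right; exact h
    have step : ∀ j₂, klT (∑ k₁, A j₁ k₁ * Br j₁ k₁ j₂) (p j₁ * q j₂)
        ≤ (∑ k₁, A j₁ k₁ * Br j₁ k₁ j₂) * Real.log (a j₁ / p j₁)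
          + ∑ k₁, A j₁ k₁ * klT (Br j₁ k₁ j₂) (q j₂) := by
      intro j₂
      have hR0 : 0 ≤ ∑ k₁, A j₁ k₁ * Br j₁ k₁ j₂ :=
        Finset.sum_nonneg fun k _ => mul_nonneg (hA0 _ _) (hBr0 _ _ _)
      rw [klT_split hR0 (hRa j₂) (hppos j₁) (hqpos j₂), add_comm]
      refine add_le_add_right ?_ _
      calc klT (∑ k₁, A j₁ k₁ * Br j₁ k₁ j₂) (a j₁ * q j₂)
          = klT (∑ k₁, A j₁ k₁ * Br j₁ k₁ j₂) (∑ k₁, A j₁ k₁ * q j₂) := by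
            rw [← Finset.sum_mul]
        _ ≤ ∑ k₁, klT (A j₁ k₁ * Br j₁ k₁ j₂) (A j₁ k₁ * q j₂) :=
            klT_sum_le _ _ _ (fun k _ => mul_nonneg (hA0 _ _) (hBr0 _ _ _))
              (fun k _ => mul_nonneg (hA0 _ _) (hqpos j₂).le)
              (fun k _ hk => by
                rcases mul_eq_zero.mp hk with h | h
                · rw [h, zero_mul]
                · exact absurd h (ne_of_gt (hqpos j₂)))
        _ = ∑ k₁, A j₁ k₁ * klT (Br j₁ k₁ j₂) (q j₂) :=
            Finset.sum_congr rfl fun k _ => klT_mul_left (hA0 _ _) (hBr0 _ _ _) (hqpos j₂)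
    calc ∑ j₂, klT (∑ k₁, A j₁ k₁ * Br j₁ k₁ j₂) (p j₁ * q j₂)
        ≤ ∑ j₂, ((∑ k₁, A j₁ k₁ * Br j₁ k₁ j₂) * Real.log (a j₁ / p j₁)
            + ∑ k₁, A j₁ k₁ * klT (Br j₁ k₁ j₂) (q j₂)) :=
          Finset.sum_le_sum fun j₂ _ => step j₂
      _ = (∑ j₂, ∑ k₁, A j₁ k₁ * Br j₁ k₁ j₂) * Real.log (a j₁ / p j₁)
            + ∑ j₂, ∑ k₁, A j₁ k₁ * klT (Br j₁ k₁ j₂) (q j₂) := by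
          rw [Finset.sum_add_distrib, Finset.sum_mul]
      _ = klT (a j₁) (p j₁) + ∑ k₁, A j₁ k₁ * ∑ j₂, klT (Br j₁ k₁ j₂) (q j₂) := by
          congr 1
          · have hsum : ∑ j₂, ∑ k₁, A j₁ k₁ * Br j₁ k₁ j₂ = a j₁ := by
              rw [Finset.sum_comm]
              exact Finset.sum_congr rfl fun k₁ _ => by
                rw [← Finset.mul_sum, hBrsum j₁ k₁, mul_one]
            rw [hsum]; rfl
          · rw [Finset.sum_comm]
            exact Finset.sum_congr rfl fun k₁ _ => (Finset.mul_sum _ _ _).symm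
  calc ∑ j : α × γ, klT (∑ k : β × δ, A j.1 k.1 * B j.1 k.1 j.2 k.2)
        (∑ k : β × δ, f j.1 k.1 * g j.2 k.2)
      = ∑ j₁, ∑ j₂, klT (∑ k₁, A j₁ k₁ * Br j₁ k₁ j₂) (p j₁ * q j₂) := by
        rw [Fintype.sum_prod_type]
        exact Finset.sum_congr rfl fun j₁ _ => Finset.sum_congr rfl fun j₂ _ => by
          rw [hR j₁ j₂, hD j₁ j₂]
    _ ≤ ∑ j₁, (klT (a j₁) (p j₁) + ∑ k₁, A j₁ k₁ * ∑ j₂, klT (Br j₁ k₁ j₂) (q j₂)) :=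
        Finset.sum_le_sum fun j₁ _ => key j₁
    _ = _ := by rw [Finset.sum_add_distrib]

/-- Chain rule (exact) for the joint KL term. -/
lemma full_eq (f : α → β → ℝ) (g : γ → δ → ℝ)
    (hf : ∀ j k, 0 < f j k) (hg : ∀ j k, 0 < g j k)
    (A : α → β → ℝ) (B : α → β → γ → δ → ℝ)
    (hA0 : ∀ j k, 0 ≤ A j k) (hB0 : ∀ j k j' k', 0 ≤ B j k j' k')
    (hBsum : ∀ j k, ∑ j', ∑ k', B j k j' k' = 1) :
    ∑ j : α × γ, ∑ k : β × δ, klT (A j.1 k.1 * B j.1 k.1 j.2 k.2) (f j.1 k.1 * g j.2 k.2)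
      = (∑ j, ∑ k, klT (A j k) (f j k))
        + ∑ j, ∑ k, A j k * ∑ j', ∑ k', klT (B j k j' k') (g j' k') := by
  have key : ∀ j₁ k₁ j₂ k₂, klT (A j₁ k₁ * B j₁ k₁ j₂ k₂) (f j₁ k₁ * g j₂ k₂)
      = B j₁ k₁ j₂ k₂ * klT (A j₁ k₁) (f j₁ k₁) + A j₁ k₁ * klT (B j₁ k₁ j₂ k₂) (g j₂ k₂) :=
    fun j₁ k₁ j₂ k₂ => klT_mul (hA0 j₁ k₁) (hB0 j₁ k₁ j₂ k₂) (hf j₁ k₁) (hg j₂ k₂)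
  calc ∑ j : α × γ, ∑ k : β × δ, klT (A j.1 k.1 * B j.1 k.1 j.2 k.2) (f j.1 k.1 * g j.2 k.2)
      = ∑ j₁, ∑ j₂, ∑ k₁, ∑ k₂, klT (A j₁ k₁ * B j₁ k₁ j₂ k₂) (f j₁ k₁ * g j₂ k₂) := by
        simp [Fintype.sum_prod_type]
    _ = ∑ j₁, ∑ k₁, ∑ j₂, ∑ k₂, (B j₁ k₁ j₂ k₂ * klT (A j₁ k₁) (f j₁ k₁)
          + A j₁ k₁ * klT (B j₁ k₁ j₂ k₂) (g j₂ k₂)) := by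
        refine Finset.sum_congr rfl fun j₁ _ => ?_
        rw [Finset.sum_comm]
        exact Finset.sum_congr rfl fun k₁ _ => Finset.sum_congr rfl fun j₂ _ =>
          Finset.sum_congr rfl fun k₂ _ => key j₁ k₁ j₂ k₂
    _ = ∑ j₁, ∑ k₁, ((∑ j₂, ∑ k₂, B j₁ k₁ j₂ k₂) * klT (A j₁ k₁) (f j₁ k₁)
          + A j₁ k₁ * ∑ j₂, ∑ k₂, klT (B j₁ k₁ j₂ k₂) (g j₂ k₂)) := by
        refine Finset.sum_congr rfl fun j₁ _ => Finset.sum_congr rfl fun k₁ _ => ?_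
        rw [Finset.sum_mul, Finset.mul_sum, ← Finset.sum_add_distrib]
        refine Finset.sum_congr rfl fun j₂ _ => ?_
        rw [Finset.sum_mul, Finset.mul_sum, ← Finset.sum_add_distrib]
    _ = _ := by
        rw [← Finset.sum_add_distrib]
        refine Finset.sum_congr rfl fun j₁ _ => ?_
        rw [← Finset.sum_add_distrib]
        refine Finset.sum_congr rfl fun k₁ _ => ?_
        rw [hBsum j₁ k₁, one_mul]
end core

section tensor

variable {α β γ δ : Type*} [Fintype α] [Fintype β] [Fintype γ] [Fintype δ]

/-- Exact tensorization of the row-marginal KL term for product measures. -/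
lemma row_tensor [Nonempty β] [Nonempty δ] (f : α → β → ℝ) (g : γ → δ → ℝ)
    (hf : ∀ j k, 0 < f j k) (hg : ∀ j k, 0 < g j k)
    (Q₁ : α → β → ℝ) (Q₂ : γ → δ → ℝ)
    (hQ₁0 : ∀ j k, 0 ≤ Q₁ j k) (hQ₁s : ∑ j, ∑ k, Q₁ j k = 1)
    (hQ₂0 : ∀ j k, 0 ≤ Q₂ j k) (hQ₂s : ∑ j, ∑ k, Q₂ j k = 1) :
    ∑ j : α × γ, klT (∑ k : β × δ, Q₁ j.1 k.1 * Q₂ j.2 k.2)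
        (∑ k : β × δ, f j.1 k.1 * g j.2 k.2)
      = (∑ j₁, klT (∑ k₁, Q₁ j₁ k₁) (∑ k₁, f j₁ k₁))
        + ∑ j₂, klT (∑ k₂, Q₂ j₂ k₂) (∑ k₂, g j₂ k₂) := by
  calc ∑ j : α × γ, klT (∑ k : β × δ, Q₁ j.1 k.1 * Q₂ j.2 k.2)
        (∑ k : β × δ, f j.1 k.1 * g j.2 k.2)
      = ∑ j₁, ∑ j₂, klT ((∑ k₁, Q₁ j₁ k₁) * (∑ k₂, Q₂ j₂ k₂))
          ((∑ k₁, f j₁ k₁) * (∑ k₂, g j₂ k₂)) := by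
        rw [Fintype.sum_prod_type]
        exact Finset.sum_congr rfl fun j₁ _ => Finset.sum_congr rfl fun j₂ _ => by
          rw [sum_pair (Q₁ j₁) (Q₂ j₂), sum_pair (f j₁) (g j₂)]
    _ = ∑ j₁, ∑ j₂, ((∑ k₂, Q₂ j₂ k₂) * klT (∑ k₁, Q₁ j₁ k₁) (∑ k₁, f j₁ k₁)
          + (∑ k₁, Q₁ j₁ k₁) * klT (∑ k₂, Q₂ j₂ k₂) (∑ k₂, g j₂ k₂)) := by
        refine Finset.sum_congr rfl fun j₁ _ => Finset.sum_congr rfl fun j₂ _ => ?_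
        exact klT_mul (Finset.sum_nonneg fun k _ => hQ₁0 j₁ k)
          (Finset.sum_nonneg fun k _ => hQ₂0 j₂ k)
          (Finset.sum_pos (fun k _ => hf j₁ k) univ_nonempty)
          (Finset.sum_pos (fun k _ => hg j₂ k) univ_nonempty)
    _ = ∑ j₁, (klT (∑ k₁, Q₁ j₁ k₁) (∑ k₁, f j₁ k₁)
          + (∑ k₁, Q₁ j₁ k₁) * ∑ j₂, klT (∑ k₂, Q₂ j₂ k₂) (∑ k₂, g j₂ k₂)) := by
        refine Finset.sum_congr rfl fun j₁ _ => ?_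
        rw [Finset.sum_add_distrib, ← Finset.sum_mul, hQ₂s, one_mul, ← Finset.mul_sum]
    _ = _ := by
        rw [Finset.sum_add_distrib, ← Finset.sum_mul, hQ₁s, one_mul]

/-- The functional is additive on tensor products. -/
lemma Fb_tensor [Nonempty α] [Nonempty β] [Nonempty γ] [Nonempty δ]
    (f : α → β → ℝ) (g : γ → δ → ℝ)
    (hf : ∀ j k, 0 < f j k) (hg : ∀ j k, 0 < g j k)
    (Q₁ : α → β → ℝ) (Q₂ : γ → δ → ℝ)
    (hQ₁0 : ∀ j k, 0 ≤ Q₁ j k) (hQ₁s : ∑ j, ∑ k, Q₁ j k = 1)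
    (hQ₂0 : ∀ j k, 0 ≤ Q₂ j k) (hQ₂s : ∑ j, ∑ k, Q₂ j k = 1)
    (l0 l1 m : ℝ) :
    Fb (fun (j : α × γ) (k : β × δ) => f j.1 k.1 * g j.2 k.2)
        (fun j k => Q₁ j.1 k.1 * Q₂ j.2 k.2) l0 l1 m
      = Fb f Q₁ l0 l1 m + Fb g Q₂ l0 l1 m := by
  have hrow := row_tensor f g hf hg Q₁ Q₂ hQ₁0 hQ₁s hQ₂0 hQ₂s
  have hQ₁s' : ∑ k, ∑ j, Q₁ j k = 1 := by rw [Finset.sum_comm]; exact hQ₁s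
  have hQ₂s' : ∑ k, ∑ j, Q₂ j k = 1 := by rw [Finset.sum_comm]; exact hQ₂s
  have hcol := row_tensor (fun (k : β) (j : α) => f j k) (fun (k : δ) (j : γ) => g j k)
    (fun k j => hf j k) (fun k j => hg j k)
    (fun k j => Q₁ j k) (fun k j => Q₂ j k)
    (fun k j => hQ₁0 j k) hQ₁s' (fun k j => hQ₂0 j k) hQ₂s'
  have hfull := full_eq f g hf hg Q₁ (fun _ _ j' k' => Q₂ j' k') hQ₁0
    (fun _ _ j' k' => hQ₂0 j' k') (fun _ _ => hQ₂s)
  have hfull2 : ∑ j, ∑ k, Q₁ j k * ∑ j', ∑ k', klT (Q₂ j' k') (g j' k')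
      = ∑ j', ∑ k', klT (Q₂ j' k') (g j' k') := by
    simp only [← Finset.sum_mul]
    rw [hQ₁s, one_mul]
  simp only [Fb]
  rw [hrow, hcol, hfull, hfull2]
  ring

end tensor

section buckets

variable {α β : Type*} [Fintype α] [Fintype β]

lemma nonempty_left (P : α → β → ℝ) (hs : ∑ j, ∑ k, P j k = 1) : Nonempty α := by
  by_contra h
  rw [not_nonempty_iff] at h
  rw [Finset.univ_eq_empty, Finset.sum_empty] at hs
  exact one_ne_zero hs.symm

lemma nonempty_right (P : α → β → ℝ) (hs : ∑ j, ∑ k, P j k = 1) : Nonempty β := by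
  by_contra h
  rw [not_nonempty_iff] at h
  simp only [Finset.univ_eq_empty, Finset.sum_empty, Finset.sum_const_zero] at hs
  exact one_ne_zero hs.symm

lemma gibbs (P Q : α → β → ℝ) (hP : ∀ j k, 0 < P j k)
    (hQ0 : ∀ j k, 0 ≤ Q j k) (hQs : ∑ j, ∑ k, Q j k = 1)
    (hPs : ∑ j, ∑ k, P j k = 1) :
    0 ≤ ∑ j, ∑ k, klT (Q j k) (P j k) := by
  have h1 : ∀ j, klT (∑ k, Q j k) (∑ k, P j k) ≤ ∑ k, klT (Q j k) (P j k) := fun j =>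
    klT_sum_le univ _ _ (fun k _ => hQ0 j k) (fun k _ => (hP j k).le)
      (fun k _ hk => absurd hk (ne_of_gt (hP j k)))
  have h2 : klT (∑ j, ∑ k, Q j k) (∑ j, ∑ k, P j k)
      ≤ ∑ j, klT (∑ k, Q j k) (∑ k, P j k) :=
    klT_sum_le univ _ _ (fun j _ => Finset.sum_nonneg fun k _ => hQ0 j k)
      (fun j _ => Finset.sum_nonneg fun k _ => (hP j k).le)
      (fun j _ hj => by
        rcases (univ : Finset β).eq_empty_or_nonempty with he | hne
        · rw [he, Finset.sum_empty]
        · exact absurd hj (ne_of_gt (Finset.sum_pos (fun k _ => hP j k) hne)))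
  rw [hQs, hPs, klT_one] at h2
  have h3 := Finset.sum_le_sum fun j (_ : j ∈ (univ : Finset α)) => h1 j
  linarith

lemma row_bound (P Q : α → β → ℝ) (hP : ∀ j k, 0 < P j k)
    (hPs : ∑ j, ∑ k, P j k = 1)
    (hQ0 : ∀ j k, 0 ≤ Q j k) (hQs : ∑ j, ∑ k, Q j k = 1) :
    ∑ j, klT (∑ k, Q j k) (∑ k, P j k) ≤ ∑ j, -Real.log (∑ k, P j k) := by
  have hβ : Nonempty β := nonempty_right P hPs
  refine Finset.sum_le_sum fun j _ => klT_le (Finset.sum_nonneg fun k _ => hQ0 j k) ?_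
    (Finset.sum_pos (fun k _ => hP j k) univ_nonempty) ?_
  · rw [← hQs]
    exact Finset.single_le_sum (f := fun j => ∑ k, Q j k)
      (fun i _ => Finset.sum_nonneg fun k _ => hQ0 i k) (Finset.mem_univ j)
  · rw [← hPs]
    exact Finset.single_le_sum (f := fun j => ∑ k, P j k)
      (fun i _ => Finset.sum_nonneg fun k _ => (hP i k).le) (Finset.mem_univ j)

lemma mem_bucket {P : α → β → ℝ} {l0 l1 m : ℝ} (Q : α → β → ℝ)
    (h0 : ∀ j k, 0 ≤ Q j k) (h1 : ∑ j, ∑ k, Q j k = 1) :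
    Fb P Q l0 l1 m ∈ bucketInfoSet P l0 l1 m :=
  ⟨Q, h0, h1, rfl⟩

lemma bucket_nonempty (P : α → β → ℝ) (hP : ∀ j k, 0 < P j k)
    (hPs : ∑ j, ∑ k, P j k = 1) (l0 l1 m : ℝ) :
    (bucketInfoSet P l0 l1 m).Nonempty :=
  ⟨_, mem_bucket P (fun j k => (hP j k).le) hPs⟩

lemma bucket_bdd (P : α → β → ℝ) (hP : ∀ j k, 0 < P j k)
    (hPs : ∑ j, ∑ k, P j k = 1) {l0 l1 m : ℝ}
    (hl0 : 0 ≤ l0) (hl1 : 0 ≤ l1) (hm : 0 ≤ m) :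
    BddAbove (bucketInfoSet P l0 l1 m) := by
  refine ⟨l0 * (∑ j, -Real.log (∑ k, P j k)) + l1 * (∑ k, -Real.log (∑ j, P j k)), ?_⟩
  rintro x ⟨Q, h0, h1, hx⟩
  have hx' : x = Fb P Q l0 l1 m := hx
  have hPs' : ∑ k, ∑ j, P j k = 1 := by rw [Finset.sum_comm]; exact hPs
  have h1' : ∑ k, ∑ j, Q j k = 1 := by rw [Finset.sum_comm]; exact h1
  have hrow := row_bound P Q hP hPs h0 h1
  have hcol := row_bound (fun k j => P j k) (fun k j => Q j k)
    (fun k j => hP j k) hPs' (fun k j => h0 j k) h1'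
  have hfull := gibbs P Q hP h0 h1 hPs
  have e1 := mul_le_mul_of_nonneg_left hrow hl0
  have e2 := mul_le_mul_of_nonneg_left hcol hl1
  have e3 := mul_nonneg hm hfull
  rw [hx']
  simp only [Fb]
  linarith

end buckets


/-- Additivity of bucketing information under tensor products, for
`0 ≤ μ ≤ 1` and `λ₀, λ₁ ≤ 1 ≤ λ₀+λ₁`:
`I(P₁⊗P₂, λ₀, λ₁, μ) = I(P₁, λ₀, λ₁, μ) + I(P₂, λ₀, λ₁, μ)`. -/
theorem bucketInfo_tensor_additive (b₀ b₁ c₀ c₁ : ℕ)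
    (P₁ : Fin b₀ → Fin b₁ → ℝ) (P₂ : Fin c₀ → Fin c₁ → ℝ)
    (hP₁pos : ∀ j k, 0 < P₁ j k) (hP₁sum : ∑ j, ∑ k, P₁ j k = 1)
    (hP₂pos : ∀ j k, 0 < P₂ j k) (hP₂sum : ∑ j, ∑ k, P₂ j k = 1)
    (lam0 lam1 mu : ℝ) (hl0 : lam0 ≤ 1) (hl1 : lam1 ≤ 1) (hls : 1 ≤ lam0 + lam1)
    (hmu0 : 0 ≤ mu) (hmu1 : mu ≤ 1) :
    sSup (bucketInfoSet (fun (j : Fin b₀ × Fin c₀) (k : Fin b₁ × Fin c₁) =>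
        P₁ j.1 k.1 * P₂ j.2 k.2) lam0 lam1 mu) =
      sSup (bucketInfoSet P₁ lam0 lam1 mu) + sSup (bucketInfoSet P₂ lam0 lam1 mu) := by
  have hl0' : 0 ≤ lam0 := by linarith
  have hl1' : 0 ≤ lam1 := by linarith
  have hα : Nonempty (Fin b₀) := nonempty_left P₁ hP₁sum
  have hβ : Nonempty (Fin b₁) := nonempty_right P₁ hP₁sum
  have hγ : Nonempty (Fin c₀) := nonempty_left P₂ hP₂sum
  have hδ : Nonempty (Fin c₁) := nonempty_right P₂ hP₂sum
  have hPpos : ∀ (j : Fin b₀ × Fin c₀) (k : Fin b₁ × Fin c₁),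
      (0:ℝ) < P₁ j.1 k.1 * P₂ j.2 k.2 := fun j k => mul_pos (hP₁pos _ _) (hP₂pos _ _)
  have hPsum : ∑ j : Fin b₀ × Fin c₀, ∑ k : Fin b₁ × Fin c₁, P₁ j.1 k.1 * P₂ j.2 k.2 = 1 := by
    rw [sum_tensor, hP₁sum, hP₂sum, one_mul]
  have bdd₁ := bucket_bdd P₁ hP₁pos hP₁sum hl0' hl1' hmu0
  have bdd₂ := bucket_bdd P₂ hP₂pos hP₂sum hl0' hl1' hmu0
  have bddP := bucket_bdd (fun (j : Fin b₀ × Fin c₀) (k : Fin b₁ × Fin c₁) =>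
      P₁ j.1 k.1 * P₂ j.2 k.2) hPpos hPsum hl0' hl1' hmu0
  have ne₁ := bucket_nonempty P₁ hP₁pos hP₁sum lam0 lam1 mu
  have ne₂ := bucket_nonempty P₂ hP₂pos hP₂sum lam0 lam1 mu
  have neP := bucket_nonempty (fun (j : Fin b₀ × Fin c₀) (k : Fin b₁ × Fin c₁) =>
      P₁ j.1 k.1 * P₂ j.2 k.2) hPpos hPsum lam0 lam1 mu
  refine le_antisymm ?_ ?_
  · -- subadditivity: the hard direction
    refine csSup_le neP ?_
    rintro x ⟨Q, hQ0, hQs, hxe⟩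
    have hx' : x = Fb (fun (j : Fin b₀ × Fin c₀) (k : Fin b₁ × Fin c₁) =>
        P₁ j.1 k.1 * P₂ j.2 k.2) Q lam0 lam1 mu := hxe
    -- marginal on the first pair of coordinates
    set A : Fin b₀ → Fin b₁ → ℝ :=
      fun j₁ k₁ => ∑ j₂, ∑ k₂, Q (j₁, j₂) (k₁, k₂) with hA
    set B : Fin b₀ → Fin b₁ → Fin c₀ → Fin c₁ → ℝ :=
      fun j₁ k₁ j₂ k₂ => if A j₁ k₁ = 0 then P₂ j₂ k₂
        else Q (j₁, j₂) (k₁, k₂) / A j₁ k₁ with hB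
    have hA0 : ∀ j₁ k₁, 0 ≤ A j₁ k₁ := fun j₁ k₁ =>
      Finset.sum_nonneg fun j₂ _ => Finset.sum_nonneg fun k₂ _ => hQ0 _ _
    have hQs' := hQs
    simp only [Fintype.sum_prod_type] at hQs'
    have hAsum : ∑ j₁, ∑ k₁, A j₁ k₁ = 1 := by
      calc ∑ j₁, ∑ k₁, A j₁ k₁
          = ∑ j₁, ∑ j₂, ∑ k₁, ∑ k₂, Q (j₁, j₂) (k₁, k₂) :=
            Finset.sum_congr rfl fun j₁ _ => Finset.sum_comm
        _ = 1 := hQs'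
    have hQA : ∀ (j : Fin b₀ × Fin c₀) (k : Fin b₁ × Fin c₁),
        Q j k = A j.1 k.1 * B j.1 k.1 j.2 k.2 := by
      intro j k
      by_cases hz : A j.1 k.1 = 0
      · rw [hB]
        simp only [hz, if_pos rfl, hz, zero_mul]
        have h1 := (Finset.sum_eq_zero_iff_of_nonneg
          (fun j₂ _ => Finset.sum_nonneg fun k₂ _ => hQ0 (j.1, j₂) (k.1, k₂))).mp hz
          j.2 (Finset.mem_univ _)
        have h2 := (Finset.sum_eq_zero_iff_of_nonneg
          (fun k₂ _ => hQ0 (j.1, j.2) (k.1, k₂))).mp h1 k.2 (Finset.mem_univ _)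
        simpa using h2
      · rw [hB]
        simp only [if_neg hz]
        rw [mul_comm, div_mul_cancel₀ _ hz]
    have hB0 : ∀ j₁ k₁ j₂ k₂, 0 ≤ B j₁ k₁ j₂ k₂ := by
      intro j₁ k₁ j₂ k₂
      rw [hB]
      dsimp only
      split_ifs with h
      · exact (hP₂pos _ _).le
      · exact div_nonneg (hQ0 _ _) (hA0 _ _)
    have hBsum : ∀ j₁ k₁, ∑ j₂, ∑ k₂, B j₁ k₁ j₂ k₂ = 1 := by
      intro j₁ k₁
      by_cases hz : A j₁ k₁ = 0
      · rw [hB]; simp only [hz, if_pos rfl]; exact hP₂sum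
      · rw [hB]
        simp only [if_neg hz, ← Finset.sum_div]
        exact div_self hz
    have hQfun : Q = fun j k => A j.1 k.1 * B j.1 k.1 j.2 k.2 :=
      funext fun j => funext fun k => hQA j k
    rw [hQfun] at hx'
    -- the three chain-rule estimates
    have hrow := row_le P₁ P₂ hP₁pos hP₂pos A B hA0 hB0 hBsum
    have hBsum' : ∀ (k₁ : Fin b₁) (j₁ : Fin b₀),
        ∑ k₂, ∑ j₂, B j₁ k₁ j₂ k₂ = 1 := fun k₁ j₁ => by
      rw [Finset.sum_comm]; exact hBsum j₁ k₁
    have hcol := row_le (fun (k₁ : Fin b₁) (j₁ : Fin b₀) => P₁ j₁ k₁)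
      (fun (k₂ : Fin c₁) (j₂ : Fin c₀) => P₂ j₂ k₂)
      (fun k j => hP₁pos j k) (fun k j => hP₂pos j k)
      (fun k₁ j₁ => A j₁ k₁) (fun k₁ j₁ k₂ j₂ => B j₁ k₁ j₂ k₂)
      (fun k j => hA0 j k) (fun k j k' j' => hB0 j k j' k') hBsum'
    have hfull := full_eq P₁ P₂ hP₁pos hP₂pos A B hA0 hB0 hBsum
    -- restate with beta-reduced shapes
    have hx2 : x = lam0 * (∑ j : Fin b₀ × Fin c₀,
          klT (∑ k : Fin b₁ × Fin c₁, A j.1 k.1 * B j.1 k.1 j.2 k.2)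
            (∑ k : Fin b₁ × Fin c₁, P₁ j.1 k.1 * P₂ j.2 k.2)) +
        lam1 * (∑ k : Fin b₁ × Fin c₁,
          klT (∑ j : Fin b₀ × Fin c₀, A j.1 k.1 * B j.1 k.1 j.2 k.2)
            (∑ j : Fin b₀ × Fin c₀, P₁ j.1 k.1 * P₂ j.2 k.2)) -
        mu * (∑ j : Fin b₀ × Fin c₀, ∑ k : Fin b₁ × Fin c₁,
          klT (A j.1 k.1 * B j.1 k.1 j.2 k.2) (P₁ j.1 k.1 * P₂ j.2 k.2)) := hx'
    have hcol' : (∑ k : Fin b₁ × Fin c₁,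
          klT (∑ j : Fin b₀ × Fin c₀, A j.1 k.1 * B j.1 k.1 j.2 k.2)
            (∑ j : Fin b₀ × Fin c₀, P₁ j.1 k.1 * P₂ j.2 k.2))
        ≤ (∑ k₁, klT (∑ j₁, A j₁ k₁) (∑ j₁, P₁ j₁ k₁))
          + ∑ k₁, ∑ j₁, A j₁ k₁ * ∑ k₂, klT (∑ j₂, B j₁ k₁ j₂ k₂) (∑ j₂, P₂ j₂ k₂) := hcol
    have hCswap : (∑ k₁, ∑ j₁, A j₁ k₁ * ∑ k₂, klT (∑ j₂, B j₁ k₁ j₂ k₂) (∑ j₂, P₂ j₂ k₂))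
        = ∑ j₁, ∑ k₁, A j₁ k₁ * ∑ k₂, klT (∑ j₂, B j₁ k₁ j₂ k₂) (∑ j₂, P₂ j₂ k₂) :=
      Finset.sum_comm
    rw [hCswap] at hcol'
    -- assemble the split objective
    have hFb2 : ∑ j₁, ∑ k₁, A j₁ k₁ * Fb P₂ (B j₁ k₁) lam0 lam1 mu
        = lam0 * (∑ j₁, ∑ k₁, A j₁ k₁ *
              ∑ j₂, klT (∑ k₂, B j₁ k₁ j₂ k₂) (∑ k₂, P₂ j₂ k₂))
          + lam1 * (∑ j₁, ∑ k₁, A j₁ k₁ *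
              ∑ k₂, klT (∑ j₂, B j₁ k₁ j₂ k₂) (∑ j₂, P₂ j₂ k₂))
          - mu * (∑ j₁, ∑ k₁, A j₁ k₁ *
              ∑ j₂, ∑ k₂, klT (B j₁ k₁ j₂ k₂) (P₂ j₂ k₂)) := by
      have e : ∀ j₁ k₁, A j₁ k₁ * Fb P₂ (B j₁ k₁) lam0 lam1 mu
          = lam0 * (A j₁ k₁ * ∑ j₂, klT (∑ k₂, B j₁ k₁ j₂ k₂) (∑ k₂, P₂ j₂ k₂))
            + lam1 * (A j₁ k₁ * ∑ k₂, klT (∑ j₂, B j₁ k₁ j₂ k₂) (∑ j₂, P₂ j₂ k₂))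
            - mu * (A j₁ k₁ * ∑ j₂, ∑ k₂, klT (B j₁ k₁ j₂ k₂) (P₂ j₂ k₂)) :=
        fun j₁ k₁ => by simp only [Fb]; ring
      simp only [e, Finset.sum_add_distrib, Finset.sum_sub_distrib, ← Finset.mul_sum]
    have hFb1 : Fb P₁ A lam0 lam1 mu
        = lam0 * (∑ j₁, klT (∑ k₁, A j₁ k₁) (∑ k₁, P₁ j₁ k₁))
          + lam1 * (∑ k₁, klT (∑ j₁, A j₁ k₁) (∑ j₁, P₁ j₁ k₁))
          - mu * (∑ j₁, ∑ k₁, klT (A j₁ k₁) (P₁ j₁ k₁)) := rfl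
    have key : x ≤ Fb P₁ A lam0 lam1 mu
        + ∑ j₁, ∑ k₁, A j₁ k₁ * Fb P₂ (B j₁ k₁) lam0 lam1 mu := by
      have e1 := mul_le_mul_of_nonneg_left hrow hl0'
      have e2 := mul_le_mul_of_nonneg_left hcol' hl1'
      rw [hx2, hFb1, hFb2, hfull]
      linarith
    have hF1 : Fb P₁ A lam0 lam1 mu ≤ sSup (bucketInfoSet P₁ lam0 lam1 mu) :=
      le_csSup bdd₁ (mem_bucket A hA0 hAsum)
    have hF2 : ∑ j₁, ∑ k₁, A j₁ k₁ * Fb P₂ (B j₁ k₁) lam0 lam1 mu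
        ≤ sSup (bucketInfoSet P₂ lam0 lam1 mu) := by
      have hb : ∀ j₁ k₁, Fb P₂ (B j₁ k₁) lam0 lam1 mu
          ≤ sSup (bucketInfoSet P₂ lam0 lam1 mu) := fun j₁ k₁ =>
        le_csSup bdd₂ (mem_bucket (B j₁ k₁) (hB0 j₁ k₁) (hBsum j₁ k₁))
      calc ∑ j₁, ∑ k₁, A j₁ k₁ * Fb P₂ (B j₁ k₁) lam0 lam1 mu
          ≤ ∑ j₁, ∑ k₁, A j₁ k₁ * sSup (bucketInfoSet P₂ lam0 lam1 mu) :=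
            Finset.sum_le_sum fun j₁ _ => Finset.sum_le_sum fun k₁ _ =>
              mul_le_mul_of_nonneg_left (hb j₁ k₁) (hA0 j₁ k₁)
        _ = sSup (bucketInfoSet P₂ lam0 lam1 mu) := by
            simp only [← Finset.sum_mul]
            rw [hAsum, one_mul]
      -- done
    linarith
  · -- superadditivity: tensorize optimizers
    have key : ∀ x₁ ∈ bucketInfoSet P₁ lam0 lam1 mu,
        ∀ x₂ ∈ bucketInfoSet P₂ lam0 lam1 mu,
        x₁ + x₂ ≤ sSup (bucketInfoSet (fun (j : Fin b₀ × Fin c₀) (k : Fin b₁ × Fin c₁) =>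
          P₁ j.1 k.1 * P₂ j.2 k.2) lam0 lam1 mu) := by
      rintro x₁ ⟨Q₁, hQ₁0, hQ₁s, hx₁e⟩ x₂ ⟨Q₂, hQ₂0, hQ₂s, hx₂e⟩
      have e₁ : x₁ = Fb P₁ Q₁ lam0 lam1 mu := hx₁e
      have e₂ : x₂ = Fb P₂ Q₂ lam0 lam1 mu := hx₂e
      have hqs : ∑ j : Fin b₀ × Fin c₀, ∑ k : Fin b₁ × Fin c₁,
          Q₁ j.1 k.1 * Q₂ j.2 k.2 = 1 := by
        rw [sum_tensor, hQ₁s, hQ₂s, one_mul]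
      have hmem := mem_bucket (P := fun (j : Fin b₀ × Fin c₀) (k : Fin b₁ × Fin c₁) =>
          P₁ j.1 k.1 * P₂ j.2 k.2) (l0 := lam0) (l1 := lam1) (m := mu)
        (fun j k => Q₁ j.1 k.1 * Q₂ j.2 k.2)
        (fun j k => mul_nonneg (hQ₁0 _ _) (hQ₂0 _ _)) hqs
      have heq : x₁ + x₂ = Fb (fun (j : Fin b₀ × Fin c₀) (k : Fin b₁ × Fin c₁) =>
          P₁ j.1 k.1 * P₂ j.2 k.2) (fun j k => Q₁ j.1 k.1 * Q₂ j.2 k.2) lam0 lam1 mu := by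
        rw [Fb_tensor P₁ P₂ hP₁pos hP₂pos Q₁ Q₂ hQ₁0 hQ₁s hQ₂0 hQ₂s lam0 lam1 mu,
          e₁, e₂]
      rw [heq]
      exact le_csSup bddP hmem
    have h1 : sSup (bucketInfoSet P₁ lam0 lam1 mu)
        ≤ sSup (bucketInfoSet (fun (j : Fin b₀ × Fin c₀) (k : Fin b₁ × Fin c₁) =>
            P₁ j.1 k.1 * P₂ j.2 k.2) lam0 lam1 mu)
          - sSup (bucketInfoSet P₂ lam0 lam1 mu) := by
      refine csSup_le ne₁ fun x₁ hx₁ => ?_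
      rw [le_sub_iff_add_le]
      have h2 : sSup (bucketInfoSet P₂ lam0 lam1 mu)
          ≤ sSup (bucketInfoSet (fun (j : Fin b₀ × Fin c₀) (k : Fin b₁ × Fin c₁) =>
              P₁ j.1 k.1 * P₂ j.2 k.2) lam0 lam1 mu) - x₁ := by
        refine csSup_le ne₂ fun x₂ hx₂ => ?_
        rw [le_sub_iff_add_le, add_comm]
        exact key x₁ hx₁ x₂ hx₂
      linarith
    linarith
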